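/- Let T_s > 0, Δ > 0, e_∞ > 0, a_l > 0, b_l > 0 and e₀ ∈ ℝ satisfy e₀ - Δ + e_∞ > 0. Set c_{1l} = 2·exp(b_l)/(exp(2b_l) + 1), and define K_{1l} : [0,∞) → ℝ by K_{1l}(t) = ((e₀ - Δ + e_∞)/c_{1l})·sech(a_l·t/(T_s - t) + b_l) - e_∞ for t ∈ [0, T_s), and K_{1l}(t) = -e_∞ for t ≥ T_s. Then: (i) c_{1l} = sech(b_l), and consequently K_{1l}(0) = e₀ - Δ; (ii) K_{1l} is strictly decreasing on [0, T_s]; (iii) K_{1l}(t) → -e_∞ as t → T_s from the left, so K_{1l} is continuous on [0,∞) (properties of the novel performance function (23)). -/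

import Mathlib

open Real Filter

/-- Properties of the novel performance function (23), built from the
hyperbolic secant `sech x = 1 / cosh x`. -/
theorem performance_function_sech_properties
    (Ts Δ einf al bl e₀ : ℝ)
    (hTs : 0 < Ts) (hΔ : 0 < Δ) (heinf : 0 < einf)
    (hal : 0 < al) (hbl : 0 < bl)
    (he₀ : 0 < e₀ - Δ + einf)
    (c1l : ℝ)
    (hc1l : c1l = 2 * Real.exp bl / (Real.exp (2 * bl) + 1))
    (K : ℝ → ℝ)
    (hK₁ : ∀ t, 0 ≤ t → t < Ts →
      K t = ((e₀ - Δ + einf) / c1l) *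
              (1 / Real.cosh (al * t / (Ts - t) + bl)) - einf)
    (hK₂ : ∀ t, Ts ≤ t → K t = -einf) :
    c1l = 1 / Real.cosh bl ∧
    K 0 = e₀ - Δ ∧
    StrictAntiOn K (Set.Icc 0 Ts) ∧
    Tendsto K (nhdsWithin Ts (Set.Iio Ts)) (nhds (-einf)) ∧
    ContinuousOn K (Set.Ici 0) := by
  have hcoshpos : ∀ x : ℝ, 0 < Real.cosh x := Real.cosh_pos
  -- (i) c1l = sech bl
  have h1 : c1l = 1 / Real.cosh bl := by
    have h2 : Real.exp (2 * bl) = Real.exp bl * Real.exp bl := by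
      rw [two_mul, Real.exp_add]
    rw [hc1l, Real.cosh_eq, Real.exp_neg, h2]
    have hE := Real.exp_ne_zero bl
    field_simp
  have hc1l_pos : 0 < c1l := by rw [h1]; positivity
  -- value at 0
  have hK0 : K 0 = e₀ - Δ := by
    rw [hK₁ 0 le_rfl hTs, h1]
    have : al * 0 / (Ts - 0) + bl = bl := by ring
    rw [this]
    have hcb := (hcoshpos bl).ne'
    field_simp
    ring
  set C := (e₀ - Δ + einf) / c1l with hC
  have hCpos : 0 < C := div_pos he₀ hc1l_pos
  set g : ℝ → ℝ := fun t => al * t / (Ts - t) + bl with hg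
  -- trimmer: the formula value is above -einf on [0,Ts)
  have hval : ∀ t, 0 ≤ t → t < Ts → -einf < K t := by
    intro t ht htTs
    rw [hK₁ t ht htTs]
    have : 0 < C * (1 / Real.cosh (al * t / (Ts - t) + bl)) := by positivity
    linarith
  -- g strictly increasing and ≥ bl on [0,Ts)
  have hgmono : ∀ s t, 0 ≤ s → s < t → t < Ts → g s < g t := by
    intro s t hs hst htTs
    have h1s : 0 < Ts - s := by linarith
    have h1t : 0 < Ts - t := by linarith
    have : al * s / (Ts - s) < al * t / (Ts - t) := by
      rw [div_lt_div_iff₀ h1s h1t]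
      nlinarith [mul_pos hal (mul_pos hTs (sub_pos.mpr hst))]
    simpa [hg] using add_lt_add_right this bl
  have hgnonneg : ∀ t, 0 ≤ t → t < Ts → 0 ≤ g t := by
    intro t ht htTs
    have h1t : 0 < Ts - t := by linarith
    have : 0 ≤ al * t / (Ts - t) := by positivity
    simp only [hg]; linarith
  -- (ii) strict antitonicity
  have hanti : StrictAntiOn K (Set.Icc 0 Ts) := by
    intro s hs t ht hst
    rcases eq_or_lt_of_le ht.2 with hteq | htlt
    · rw [hteq] at hst ⊢
      rw [hK₂ Ts le_rfl]
      exact hval s hs.1 hst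
    · rw [hK₁ s hs.1 (hst.trans htlt), hK₁ t (hs.1.trans hst.le) htlt]
      have hgs := hgmono s t hs.1 hst htlt
      have hcosh_lt : Real.cosh (g s) < Real.cosh (g t) := by
        rw [Real.cosh_lt_cosh]
        rw [abs_of_nonneg (hgnonneg s hs.1 (hst.trans htlt)),
            abs_of_nonneg (hgnonneg t (hs.1.trans hst.le) htlt)]
        exact hgs
      have : 1 / Real.cosh (g t) < 1 / Real.cosh (g s) :=
        one_div_lt_one_div_of_lt (hcoshpos _) hcosh_lt
      have := mul_lt_mul_of_pos_left this hCpos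
      simp only [hg] at this ⊢
      linarith
  -- limit of g at Ts from the left : atTop
  have hg_top : Tendsto g (nhdsWithin Ts (Set.Iio Ts)) atTop := by
    have h1 : Tendsto (fun t => Ts - t) (nhdsWithin Ts (Set.Iio Ts)) (nhdsWithin 0 (Set.Ioi 0)) := by
      apply tendsto_nhdsWithin_of_tendsto_nhds_of_eventually_within
      · have : Tendsto (fun t : ℝ => Ts - t) (nhds Ts) (nhds (Ts - Ts)) :=
          (tendsto_const_nhds.sub tendsto_id)
        simpa using this.mono_left nhdsWithin_le_nhds
      · filter_upwards [self_mem_nhdsWithin] with x hx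
        exact Set.mem_Ioi.mpr (sub_pos.mpr (Set.mem_Iio.mp hx))
    have h2 : Tendsto (fun t => (Ts - t)⁻¹) (nhdsWithin Ts (Set.Iio Ts)) atTop :=
      tendsto_inv_nhdsGT_zero.comp h1
    have h3 : Tendsto (fun t => al * t) (nhdsWithin Ts (Set.Iio Ts)) (nhds (al * Ts)) :=
      (tendsto_const_nhds.mul tendsto_id).mono_left nhdsWithin_le_nhds
    have h4 : Tendsto (fun t => al * t * (Ts - t)⁻¹) (nhdsWithin Ts (Set.Iio Ts)) atTop :=
      h3.pos_mul_atTop (by positivity) h2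
    have h5 : Tendsto (fun t => al * t / (Ts - t)) (nhdsWithin Ts (Set.Iio Ts)) atTop := by
      simpa [div_eq_mul_inv] using h4
    exact tendsto_atTop_add_const_right _ bl h5
  -- cosh → atTop along atTop
  have hcosh_top : Tendsto Real.cosh atTop atTop := by
    apply tendsto_atTop_mono (fun x => ?_) (Real.tendsto_exp_atTop.atTop_div_const two_pos)
    rw [Real.cosh_eq]
    have := (Real.exp_pos (-x)).le
    linarith
  -- (iii) left limit
  have hlim : Tendsto K (nhdsWithin Ts (Set.Iio Ts)) (nhds (-einf)) := by
    have hsech : Tendsto (fun t => 1 / Real.cosh (g t)) (nhdsWithin Ts (Set.Iio Ts)) (nhds 0) := by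
      simpa [one_div, Function.comp_def] using tendsto_inv_atTop_zero.comp (hcosh_top.comp hg_top)
    have hf : Tendsto (fun t => C * (1 / Real.cosh (g t)) - einf)
        (nhdsWithin Ts (Set.Iio Ts)) (nhds (-einf)) := by
      have h := ((tendsto_const_nhds (x := C) (f := nhdsWithin Ts (Set.Iio Ts))).mul hsech).sub
        (tendsto_const_nhds (x := einf) (f := nhdsWithin Ts (Set.Iio Ts)))
      simpa using h
    apply hf.congr'
    filter_upwards [Ioo_mem_nhdsLT_of_mem (Set.mem_Ioc.mpr ⟨hTs, le_rfl⟩)] with t ht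
    · exact (hK₁ t ht.1.le ht.2).symm
  -- (iv) continuity on [0,∞)
  have hcont : ContinuousOn K (Set.Ici 0) := by
    intro x hx
    rcases lt_trichotomy x Ts with hxlt | hxeq | hxgt
    · -- x < Ts : agrees with the smooth formula near x
      have hx0 : (0:ℝ) ≤ x := hx
      have hfc : ContinuousWithinAt
          (fun t => C * (1 / Real.cosh (g t)) - einf) (Set.Ici 0) x := by
        apply ContinuousAt.continuousWithinAt
        have hne : Ts - x ≠ 0 := by intro h; linarith [sub_eq_zero.mp h]
        have hgc : ContinuousAt g x := by
          apply ContinuousAt.add _ continuousAt_const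
          exact (continuousAt_const.mul continuousAt_id).div
            (continuousAt_const.sub continuousAt_id) hne
        exact ((continuousAt_const.mul
          ((continuousAt_const.div (Real.continuous_cosh.continuousAt.comp hgc)
            (hcoshpos _).ne'))).sub continuousAt_const)
      apply hfc.congr_of_eventuallyEq_of_mem ?_ hx
      · filter_upwards [inter_mem_nhdsWithin (Set.Ici 0)
          (Iio_mem_nhds hxlt)] with t ht
        exact hK₁ t ht.1 ht.2
    · -- x = Ts : glue the two limits
      rw [hxeq]
      have hKTs : K Ts = -einf := hK₂ Ts le_rfl
      rw [ContinuousWithinAt, hKTs]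
      have hright : Tendsto K (nhdsWithin Ts (Set.Ici Ts)) (nhds (-einf)) := by
        apply Tendsto.congr' _ tendsto_const_nhds
        filter_upwards [self_mem_nhdsWithin] with t ht
        exact (hK₂ t ht).symm
      have huniv : Tendsto K (nhdsWithin Ts (Set.Iio Ts ∪ Set.Ici Ts)) (nhds (-einf)) := by
        rw [nhdsWithin_union]
        exact Tendsto.sup hlim hright
      apply huniv.mono_left
      apply nhdsWithin_mono
      intro t _
      rcases lt_or_ge t Ts with h | h
      · exact Or.inl h
      · exact Or.inr h
    · -- x > Ts : locally constant
      have hfc : ContinuousWithinAt (fun _ : ℝ => -einf) (Set.Ici 0) x :=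
        continuousWithinAt_const
      apply hfc.congr_of_eventuallyEq_of_mem ?_ hx
      filter_upwards [inter_mem_nhdsWithin (Set.Ici 0)
        (Ioi_mem_nhds hxgt)] with t ht
      exact hK₂ t ht.2.le
  exact ⟨h1, hK0, hanti, hlim, hcont⟩
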